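/- Let n ≥ 1 be a natural number, let a₀, a₁, …, a_n be real numbers with aᵢ ≠ 0 for all 0 ≤ i ≤ n − 1, let x be a real number, and set bᵢ = aᵢ/a_{i−1} for 1 ≤ i ≤ n. Define g₀ = 0 and, for 0 ≤ l ≤ n − 1, g_{l+1} = b_{n−l}·x / (1 + b_{n−l}·x − g_l), assuming each denominator 1 + b_{n−l}·x − g_l is nonzero and also 1 − g_n ≠ 0. Then Σ_{i=0}^{n} aᵢ·xⁱ = a₀ / (1 − g_n). (This is the continued fraction representation of a polynomial used to link the wide factorized representation and the deep continued-fraction representation.) -/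

import Mathlib

/-- The continued fraction representation of a polynomial `∑ aᵢxⁱ`:
with `bᵢ = aᵢ/a_{i-1}` and the inside-out recursion `g 0 = 0`,
`g (l+1) = b (n-l)·x / (1 + b (n-l)·x - g l)`, one has
`∑_{i=0}^n aᵢ xⁱ = a₀ / (1 - g n)`, provided all denominators are nonzero. -/
theorem continued_fraction_polynomial (n : ℕ) (hn : 1 ≤ n) (a : ℕ → ℝ)
    (ha : ∀ i ≤ n - 1, a i ≠ 0) (x : ℝ) (b : ℕ → ℝ)
    (hb : ∀ i, 1 ≤ i → i ≤ n → b i = a i / a (i - 1))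
    (g : ℕ → ℝ) (hg0 : g 0 = 0)
    (hgs : ∀ l ≤ n - 1, g (l + 1) = b (n - l) * x / (1 + b (n - l) * x - g l))
    (hden : ∀ l ≤ n - 1, 1 + b (n - l) * x - g l ≠ 0)
    (hden' : 1 - g n ≠ 0) :
    ∑ i ∈ Finset.range (n + 1), a i * x ^ i = a 0 / (1 - g n) := by
  set Q : ℕ → ℝ := fun l => ∑ i ∈ Finset.range (l + 1), a (n - l + i) * x ^ i with hQ
  have hQ0 : Q 0 = a n := by simp [hQ]
  have hQrec : ∀ l, l + 1 ≤ n → Q (l + 1) = a (n - (l + 1)) + x * Q l := by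
    intro l hl
    simp only [hQ]
    rw [Finset.sum_range_succ']
    have h1 : ∀ i ∈ Finset.range (l + 1), a (n - (l + 1) + (i + 1)) * x ^ (i + 1)
        = x * (a (n - l + i) * x ^ i) := by
      intro i _
      have : n - (l + 1) + (i + 1) = n - l + i := by omega
      rw [this]; ring
    rw [Finset.sum_congr rfl h1, ← Finset.mul_sum]
    simp
    ring
  have key : ∀ l, 1 ≤ l → l ≤ n → Q l ≠ 0 ∧ g l = 1 - a (n - l) / Q l := by
    intro l
    induction l with
    | zero => omega
    | succ l ih =>
      intro _ hl
      rcases Nat.eq_zero_or_pos l with hl0 | hl1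
      · subst hl0
        have han1 : a (n - 1) ≠ 0 := ha (n - 1) le_rfl
        have hbn : b n = a n / a (n - 1) := by
          have := hb n hn le_rfl; simpa using this
        have hg1 : g 1 = b (n - 0) * x / (1 + b (n - 0) * x - g 0) :=
          hgs 0 (by omega)
        have hD : 1 + b (n - 0) * x - g 0 ≠ 0 := hden 0 (by omega)
        simp only [Nat.sub_zero, hg0, sub_zero] at hg1 hD
        have hQ1 : Q 1 = a (n - 1) + x * a n := by rw [hQrec 0 hn, hQ0]
        have hQ1' : Q 1 = a (n - 1) * (1 + b n * x) := by
          rw [hQ1, hbn]; field_simp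
        have hQ1ne : Q 1 ≠ 0 := by rw [hQ1']; exact mul_ne_zero han1 hD
        refine ⟨hQ1ne, ?_⟩
        have hs : a n * x + a (n - 1) ≠ 0 := by
          rw [hQ1] at hQ1ne
          intro h; apply hQ1ne; linarith
        have h3 : a (n - 1) / Q 1 = (1 + b n * x)⁻¹ := by
          rw [hQ1', div_mul_cancel_left₀ han1]
        rw [hg1, h3, div_eq_iff hD, sub_mul, one_mul, inv_mul_cancel₀ hD]
        ring
      · -- inductive step: l ≥ 1
        have hln : l ≤ n := by omega
        obtain ⟨hQl, hgl⟩ := ih hl1 hln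
        have hA : a (n - l) ≠ 0 := ha (n - l) (by omega)
        have hB : a (n - (l + 1)) ≠ 0 := ha (n - (l + 1)) (by omega)
        have hbnl : b (n - l) = a (n - l) / a (n - (l + 1)) := by
          have h := hb (n - l) (by omega) (by omega)
          have : n - l - 1 = n - (l + 1) := by omega
          rwa [this] at h
        have hgs' : g (l + 1) = b (n - l) * x / (1 + b (n - l) * x - g l) :=
          hgs l (by omega)
        have hD : 1 + b (n - l) * x - g l ≠ 0 := hden l (by omega)
        have hQr : Q (l + 1) = a (n - (l + 1)) + x * Q l := hQrec l hl
        -- express D in terms of Q's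
        have hDval : (1 + b (n - l) * x - g l) * (a (n - (l + 1)) * Q l)
            = a (n - l) * Q (l + 1) := by
          rw [hgl, hbnl, hQr]
          field_simp
          ring
        have hQl1 : Q (l + 1) ≠ 0 := by
          intro h
          rw [h, mul_zero] at hDval
          exact (mul_ne_zero hD (mul_ne_zero hB hQl)) hDval
        refine ⟨hQl1, ?_⟩
        have hD2 : (1 + b (n - l) * x - g l) = a (n - l) * Q (l + 1) / (a (n - (l + 1)) * Q l) := by
          rw [eq_div_iff (mul_ne_zero hB hQl)]; exact hDval
        have h2 : (1 - a (n - (l + 1)) / Q (l + 1)) * (1 + b (n - l) * x - g l)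
            = b (n - l) * x := by
          rw [hD2, hbnl, hQr]
          rw [hQr] at hQl1
          field_simp
          ring
        rw [hgs', div_eq_iff hD]
        linarith [h2]

  obtain ⟨hQn, hgn⟩ := key n hn le_rfl
  have ha0 : a 0 ≠ 0 := ha 0 (by omega)
  have hQn' : Q n = ∑ i ∈ Finset.range (n + 1), a i * x ^ i := by
    simp only [hQ]
    apply Finset.sum_congr rfl
    intro i _
    congr 2
    omega
  rw [← hQn']
  rw [hgn]
  simp only [Nat.sub_self] at *
  rw [sub_sub_cancel]
  field_simp
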